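/- Let a, b ∈ ℝ, c, B ∈ ℝ \ {0}, and let p, q ∈ ℕ with b = −(p+q)B/q. Then H(x,y) = (xy)^q · (By − ax − c)^p is a polynomial first integral on ℝ² of the Lotka–Volterra system ẋ = x(ax + by + c), ẏ = y((ab/B)x + By − c). -/

import Mathlib

theorem stmt7 (a b c B : ℝ) (hc : c ≠ 0) (hB : B ≠ 0) (p q : ℕ)
    (hp : 0 < p) (hq : 0 < q) (hb : b = -((p : ℝ) + q) * B / q) :
    ∀ x y : ℝ,
      deriv (fun x' => (x' * y) ^ q * (B * y - a * x' - c) ^ p) x *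
          (x * (a * x + b * y + c)) +
        deriv (fun y' => (x * y') ^ q * (B * y' - a * x - c) ^ p) y *
          (y * (a * b / B * x + B * y - c)) = 0 := by
  obtain ⟨n, rfl⟩ : ∃ n, p = n + 1 := ⟨p - 1, (Nat.succ_pred_eq_of_pos hp).symm⟩
  obtain ⟨m, rfl⟩ : ∃ m, q = m + 1 := ⟨q - 1, (Nat.succ_pred_eq_of_pos hq).symm⟩
  intro x y
  have hqne : ((m : ℝ) + 1) ≠ 0 := by positivity
  have h1 : HasDerivAt (fun x' : ℝ => (x' * y) ^ (m + 1) * (B * y - a * x' - c) ^ (n + 1))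
      (((m : ℝ) + 1) * (x * y) ^ m * y * (B * y - a * x - c) ^ (n + 1) +
        (x * y) ^ (m + 1) * (((n : ℝ) + 1) * (B * y - a * x - c) ^ n * (-a))) x := by
    have hf : HasDerivAt (fun x' : ℝ => (x' * y) ^ (m + 1)) (((m : ℝ) + 1) * (x * y) ^ m * y) x := by
      have := ((hasDerivAt_id x).mul_const y).pow (m + 1)
      simpa [Pi.pow_def, mul_comm, mul_assoc] using this
    have hg : HasDerivAt (fun x' : ℝ => (B * y - a * x' - c) ^ (n + 1))
        (((n : ℝ) + 1) * (B * y - a * x - c) ^ n * (-a)) x := by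
      have hbase : HasDerivAt (fun x' : ℝ => B * y - a * x' - c) (-a) x := by
        simpa using (((hasDerivAt_id x).const_mul a).const_sub (B * y)).sub_const c
      simpa [Pi.pow_def] using hbase.pow (n + 1)
    simpa [Pi.mul_def] using hf.mul hg
  have h2 : HasDerivAt (fun y' : ℝ => (x * y') ^ (m + 1) * (B * y' - a * x - c) ^ (n + 1))
      (((m : ℝ) + 1) * (x * y) ^ m * x * (B * y - a * x - c) ^ (n + 1) +
        (x * y) ^ (m + 1) * (((n : ℝ) + 1) * (B * y - a * x - c) ^ n * B)) y := by
    have hf : HasDerivAt (fun y' : ℝ => (x * y') ^ (m + 1)) (((m : ℝ) + 1) * (x * y) ^ m * x) y := by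
      have := ((hasDerivAt_id y).const_mul x).pow (m + 1)
      simpa [Pi.pow_def, mul_comm, mul_assoc] using this
    have hg : HasDerivAt (fun y' : ℝ => (B * y' - a * x - c) ^ (n + 1))
        (((n : ℝ) + 1) * (B * y - a * x - c) ^ n * B) y := by
      have hbase : HasDerivAt (fun y' : ℝ => B * y' - a * x - c) B y := by
        simpa using (((hasDerivAt_id y).const_mul B).sub_const (a * x)).sub_const c
      simpa [Pi.pow_def] using hbase.pow (n + 1)
    simpa [Pi.mul_def] using hf.mul hg
  rw [h1.deriv, h2.deriv, hb]
  have hxy : (x * y) ^ (m + 1) = (x * y) ^ m * (x * y) := pow_succ _ _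
  have hu : (B * y - a * x - c) ^ (n + 1) = (B * y - a * x - c) ^ n * (B * y - a * x - c) :=
    pow_succ _ _
  rw [hxy, hu]
  push_cast
  field_simp
  ring
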